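/- Let n be even and s₀ⁿ⁻¹(x) = ⊕_{i=1}^{n-1} ∧_{j≠i, j≤n-1} x_j. Then s₀ⁿ(x) := ⊕_{i=1}^{n} ∧_{j∈{1,...,n}, j≠i} x_j satisfies s₀ⁿ(x) = s₀ⁿ⁻¹(x) ∧ (x₁ ⊕ x₂ ⊕ ⋯ ⊕ x_n) for all Boolean inputs. -/

import Mathlib

open Finset

private lemma zmod2_mul_self (a : ZMod 2) : a * a = a := by revert a; decide

/-- For even `n`, `s₀ⁿ(x) = s₀ⁿ⁻¹(x) ∧ (x₁ ⊕ ⋯ ⊕ xₙ)`. -/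
theorem stmt2 (n : ℕ) (hev : Even n) (x : ℕ → ZMod 2) :
    (∑ i ∈ Icc 1 n, ∏ j ∈ (Icc 1 n).erase i, x j) =
      (∑ i ∈ Icc 1 (n - 1), ∏ j ∈ (Icc 1 (n - 1)).erase i, x j) *
        (∑ i ∈ Icc 1 n, x i) := by
  rcases n with _ | m
  · simp
  have hm : Odd m := by
    rw [← Nat.not_even_iff_odd]
    exact Nat.even_add_one.mp hev
  simp only [Nat.add_sub_cancel]
  have hnm : m + 1 ∉ Icc 1 m := by simp
  have hIcc : Icc 1 (m + 1) = insert (m + 1) (Icc 1 m) := by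
    rw [Finset.insert_Icc_right_eq_Icc_add_one (by omega)]
  set S := Icc 1 m with hS
  set P := ∏ j ∈ S, x j with hP
  -- rewrite LHS
  rw [hIcc, Finset.sum_insert hnm, Finset.erase_insert hnm, Finset.sum_insert hnm]
  have hterm : ∀ i ∈ S, (∏ j ∈ (insert (m + 1) S).erase i, x j)
      = x (m + 1) * ∏ j ∈ S.erase i, x j := by
    intro i hi
    have hine : i ≤ m := (Finset.mem_Icc.mp hi).2
    rw [Finset.erase_insert_of_ne (by omega), Finset.prod_insert (by
      simp only [Finset.mem_erase]
      rintro ⟨-, h⟩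
      exact hnm h)]
  rw [Finset.sum_congr rfl hterm]
  -- rewrite RHS
  rw [Finset.sum_mul]
  have hrterm : ∀ i ∈ S, (∏ j ∈ S.erase i, x j) * (x (m + 1) + ∑ k ∈ S, x k)
      = x (m + 1) * (∏ j ∈ S.erase i, x j) + P := by
    intro i hi
    set A := ∏ j ∈ S.erase i, x j with hA
    have h1 : A * ∑ k ∈ S, x k = P := by
      rw [Finset.mul_sum]
      have h2 : ∀ k ∈ S.erase i, A * x k = A := by
        intro k hk
        rw [hA, ← Finset.mul_prod_erase _ _ hk, mul_comm, ← mul_assoc,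
          zmod2_mul_self]
      rw [← Finset.sum_erase_add _ _ hi, Finset.sum_congr rfl h2,
        Finset.sum_const, hA, mul_comm, Finset.mul_prod_erase _ _ hi, ← hP]
      have hcard : (S.erase i).card = m - 1 := by
        rw [Finset.card_erase_of_mem hi, hS, Nat.card_Icc]
        omega
      rw [hcard]
      have : ((m - 1) • A : ZMod 2) = 0 := by
        rw [nsmul_eq_mul]
        have : ((m - 1 : ℕ) : ZMod 2) = 0 := by
          rw [ZMod.natCast_eq_zero_iff]
          obtain ⟨t, rfl⟩ := hm
          omega
        rw [this, zero_mul]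
      rw [this, zero_add]
    rw [mul_add, h1, mul_comm A (x (m + 1))]
  rw [Finset.sum_congr rfl hrterm, Finset.sum_add_distrib, Finset.sum_const]
  have hcardS : S.card = m := by rw [hS, Nat.card_Icc]; omega
  have : (S.card • P : ZMod 2) = P := by
    rw [hcardS, nsmul_eq_mul]
    have : ((m : ℕ) : ZMod 2) = 1 := by
      obtain ⟨t, rfl⟩ := hm
      push_cast
      rw [show (2 : ZMod 2) = 0 by decide]
      ring
    rw [this, one_mul]
  rw [this, add_comm, hP]
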